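/- Let (A,Γ,G,≺) be a linear GIFS on ℝ^d with open set condition and 0 < h_i := H^δ(E_i) < ∞ for all i, let G* be its measure-recording GIFS, and let ψ_i = π_i ∘ ρ_i^{−1} : F_i → E_i. Then ψ_i is 1/δ-Hölder continuous; more precisely, |ψ_i(x_1) − ψ_i(x_2)| ≤ 2D · r_min^{−1} · h^{−1/δ} · |x_1 − x_2|^{1/δ} for all x_1, x_2 ∈ F_i, where D = max_{1≤j≤N} diam E_j, r_min = min_{e∈Γ} r_e, and h = min_{1≤j≤N} h_j. -/

import Mathlib

open MeasureTheory Set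

noncomputable section

/-- A graph-directed iterated function system (GIFS) with vertex set `Fin N`,
a finite edge set, and a contracting similitude of ratio `r e ∈ (0,1)` for each edge. -/
structure GIFS (X : Type) [MetricSpace X] (N : ℕ) where
  Edge : Type
  fintypeEdge : Fintype Edge
  src : Edge → Fin N
  tgt : Edge → Fin N
  r : Edge → ℝ
  r_pos : ∀ e, 0 < r e
  r_lt_one : ∀ e, r e < 1
  g : Edge → X → X
  g_sim : ∀ e x y, dist (g e x) (g e y) = r e * dist x y

attribute [instance] GIFS.fintypeEdge

/-- The finite prefix of length `n` of an infinite word. -/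
def prefixList {α : Type} (ω : ℕ → α) (n : ℕ) : List α := List.ofFn fun k : Fin n => ω k

/-- Spectral radius of a real square matrix: supremum of the moduli of its
complex eigenvalues. -/
def specRad {n : ℕ} (A : Matrix (Fin n) (Fin n) ℝ) : ℝ :=
  sSup ((fun z => ‖z‖) '' spectrum ℂ (A.map Complex.ofReal))

namespace GIFS

variable {X : Type} [MetricSpace X] {N : ℕ}

/-- `γ` is a finite path (possibly empty) starting from the vertex `i`. -/
def IsPathFrom (G : GIFS X N) (i : Fin N) (γ : List G.Edge) : Prop :=
  γ.Chain' (fun a b => G.tgt a = G.src b) ∧ ∀ e ∈ γ.head?, G.src e = i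

/-- The terminal vertex of a finite path starting at `i`. -/
def pathTgt (G : GIFS X N) (i : Fin N) (γ : List G.Edge) : Fin N :=
  (γ.getLast?).elim i G.tgt

/-- The composition `g_{γ₁} ∘ ⋯ ∘ g_{γ_n}` along a finite path. -/
def pathMap (G : GIFS X N) (γ : List G.Edge) : X → X :=
  γ.foldr (fun e f => G.g e ∘ f) id

/-- The cylinder set `E_γ = g_{γ₁} ∘ ⋯ ∘ g_{γ_n} (E_{t(γ)})` of a finite path from `i`. -/
def pathSet (G : GIFS X N) (E : Fin N → Set X) (i : Fin N) (γ : List G.Edge) : Set X :=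
  G.pathMap γ '' E (G.pathTgt i γ)

/-- `E` is the family of invariant sets of the GIFS: nonempty compact sets
satisfying the set equations. -/
def IsInvariant (G : GIFS X N) (E : Fin N → Set X) : Prop :=
  (∀ i, (E i).Nonempty) ∧ (∀ i, IsCompact (E i)) ∧
    ∀ i, E i = ⋃ e ∈ {e : G.Edge | G.src e = i}, G.g e '' E (G.tgt e)

/-- The open set condition witnessed by a given family of open sets. -/
def OSCWith (G : GIFS X N) (U : Fin N → Set X) : Prop :=
  (∀ i, (U i).Nonempty ∧ IsOpen (U i)) ∧
  (∀ e : G.Edge, G.g e '' U (G.tgt e) ⊆ U (G.src e)) ∧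
  ∀ e f : G.Edge, e ≠ f → G.src e = G.src f →
    Disjoint (G.g e '' U (G.tgt e)) (G.g f '' U (G.tgt f))

/-- The open set condition. -/
def OSC (G : GIFS X N) : Prop := ∃ U, G.OSCWith U

/-- The base graph is strongly connected. -/
def StronglyConnected (G : GIFS X N) : Prop :=
  ∀ i j : Fin N, ∃ γ : List G.Edge, γ ≠ [] ∧ G.IsPathFrom i γ ∧ G.pathTgt i γ = j

/-- The matrix `M(t)` with entries `M(t)_{ij} = ∑_{e ∈ Γ_{ij}} r_e ^ t`. -/
def M (G : GIFS X N) (t : ℝ) : Matrix (Fin N) (Fin N) ℝ :=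
  Matrix.of fun i j => ∑ e : G.Edge, if G.src e = i ∧ G.tgt e = j then G.r e ^ t else 0

/-- `δ` is the similarity dimension: the (unique) positive real with `ρ(M(δ)) = 1`. -/
def IsSimDim (G : GIFS X N) (δ : ℝ) : Prop := 0 < δ ∧ specRad (G.M δ) = 1

/-- The space of infinite paths emanating from the vertex `i`. -/
def InfPath (G : GIFS X N) (i : Fin N) : Type :=
  {ω : ℕ → G.Edge // G.src (ω 0) = i ∧ ∀ n, G.tgt (ω n) = G.src (ω (n + 1))}

instance (G : GIFS X N) : MeasurableSpace G.Edge := ⊤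

instance (G : GIFS X N) (i : Fin N) : MeasurableSpace (G.InfPath i) :=
  MeasurableSpace.comap Subtype.val MeasurableSpace.pi

/-- `π` is the symbolic projection `Γ_i^∞ → E_i` : the image of an infinite path
belongs to every cylinder set of its finite prefixes. -/
def IsCoding (G : GIFS X N) (E : Fin N → Set X) (i : Fin N) (π : G.InfPath i → X) : Prop :=
  ∀ (ω : G.InfPath i) (n : ℕ), π ω ∈ G.pathSet E i (prefixList ω.1 n)

end GIFS

/-- An ordered GIFS: a GIFS with a partial order on the edges which restricts to
a linear order on each `Γ_i` (edges emanating from `i`), edges emanating from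
distinct vertices being incomparable. -/
structure OGIFS (X : Type) [MetricSpace X] (N : ℕ) extends GIFS X N where
  elt : Edge → Edge → Prop
  elt_src : ∀ {a b}, elt a b → src a = src b
  elt_irrefl : ∀ a, ¬ elt a a
  elt_trans : ∀ {a b c}, elt a b → elt b c → elt a c
  elt_total : ∀ a b, src a = src b → elt a b ∨ a = b ∨ elt b a

namespace OGIFS

variable {X : Type} [MetricSpace X] {N : ℕ}

/-- The induced dictionary order on finite paths. -/
def PathLt (G : OGIFS X N) (γ ω : List G.Edge) : Prop := List.Lex G.elt γ ω

/-- Two adjacent edges in some `Γ_i`: consecutive in the order `≺`. -/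
def AdjacentEdges (G : OGIFS X N) (e f : G.Edge) : Prop :=
  G.elt e f ∧ ¬ ∃ e', G.elt e e' ∧ G.elt e' f

/-- Two same-length paths from `i`, adjacent (consecutive) in the dictionary order. -/
def Adjacent (G : OGIFS X N) (i : Fin N) (γ ω : List G.Edge) : Prop :=
  G.toGIFS.IsPathFrom i γ ∧ G.toGIFS.IsPathFrom i ω ∧ γ.length = ω.length ∧
  G.PathLt γ ω ∧
  ¬ ∃ η : List G.Edge, G.toGIFS.IsPathFrom i η ∧ η.length = γ.length ∧
      G.PathLt γ η ∧ G.PathLt η ω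

/-- A linear GIFS: every two adjacent cylinders of invariant sets intersect. -/
def IsLinear (G : OGIFS X N) (E : Fin N → Set X) : Prop :=
  ∀ (i : Fin N) (γ ω : List G.Edge), G.Adjacent i γ ω →
    (G.toGIFS.pathSet E i γ ∩ G.toGIFS.pathSet E i ω).Nonempty

/-- An infinite path from `i` is lowest if all its finite prefixes are lowest in the
dictionary order among same-length paths from `i`. -/
def IsLowest (G : OGIFS X N) (i : Fin N) (ω : G.toGIFS.InfPath i) : Prop :=
  ∀ (n : ℕ) (γ : List G.Edge), G.toGIFS.IsPathFrom i γ → γ.length = n →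
    γ = prefixList ω.1 n ∨ G.PathLt (prefixList ω.1 n) γ

/-- An infinite path from `i` is highest if all its finite prefixes are highest. -/
def IsHighest (G : OGIFS X N) (i : Fin N) (ω : G.toGIFS.InfPath i) : Prop :=
  ∀ (n : ℕ) (γ : List G.Edge), G.toGIFS.IsPathFrom i γ → γ.length = n →
    γ = prefixList ω.1 n ∨ G.PathLt γ (prefixList ω.1 n)

/-- `a` is the head of `E_i`: the projection of the lowest infinite path from `i`. -/
def IsHead (G : OGIFS X N) (E : Fin N → Set X) (i : Fin N) (a : X) : Prop :=
  ∃ ω : G.toGIFS.InfPath i, G.IsLowest i ω ∧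
    ∀ n : ℕ, a ∈ G.toGIFS.pathSet E i (prefixList ω.1 n)

/-- `a` is the tail of `E_i`: the projection of the highest infinite path from `i`. -/
def IsTail (G : OGIFS X N) (E : Fin N → Set X) (i : Fin N) (a : X) : Prop :=
  ∃ ω : G.toGIFS.InfPath i, G.IsHighest i ω ∧
    ∀ n : ℕ, a ∈ G.toGIFS.pathSet E i (prefixList ω.1 n)

/-- The chain condition: for adjacent edges `e ≺ f` emanating from a common vertex,
`g_e(tail of E_{t(e)}) = g_f(head of E_{t(f)})`. -/
def ChainCondition (G : OGIFS X N) (E : Fin N → Set X) : Prop :=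
  ∀ e f : G.Edge, G.AdjacentEdges e f →
    ∀ b a : X, G.IsTail E (G.tgt e) b → G.IsHead E (G.tgt f) a → G.g e b = G.g f a

open Classical in
/-- Translation part of the maps of the measure-recording GIFS:
`b_e = ∑_{e' ≺ e} h_{t(e')} r_{e'}^δ`. -/
def bCoef (G : OGIFS X N) (δ : ℝ) (h : Fin N → ℝ) (e : G.Edge) : ℝ :=
  ∑ e' : G.Edge, if G.elt e' e then h (G.tgt e') * G.r e' ^ δ else 0

/-- The maps `f_e (x) = r_e^δ x + b_e` of the measure-recording GIFS. -/
def fmap (G : OGIFS X N) (δ : ℝ) (h : Fin N → ℝ) (e : G.Edge) : ℝ → ℝ :=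
  fun x => G.r e ^ δ * x + G.bCoef δ h e

/-- Composition of the measure-recording maps along a finite path. -/
def fPathMap (G : OGIFS X N) (δ : ℝ) (h : Fin N → ℝ) (γ : List G.Edge) : ℝ → ℝ :=
  γ.foldr (fun e f => G.fmap δ h e ∘ f) id

/-- Cylinder intervals `F_γ` of the measure-recording GIFS (with `F_i = [0, h_i]`). -/
def fPathSet (G : OGIFS X N) (δ : ℝ) (h : Fin N → ℝ) (i : Fin N) (γ : List G.Edge) : Set ℝ :=
  G.fPathMap δ h γ '' Icc 0 (h (G.toGIFS.pathTgt i γ))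

/-- `ρ` is the symbolic projection `Γ_i^∞ → F_i` of the measure-recording GIFS. -/
def IsFCoding (G : OGIFS X N) (δ : ℝ) (h : Fin N → ℝ) (i : Fin N)
    (ρ : G.toGIFS.InfPath i → ℝ) : Prop :=
  ∀ (ω : G.toGIFS.InfPath i) (n : ℕ), ρ ω ∈ G.fPathSet δ h i (prefixList ω.1 n)

end OGIFS

/-- An optimal parametrization of an `s`-set `K`: a surjection `[0,1] → K` which is
almost one-to-one, measure-preserving and `1/s`-Hölder continuous. -/
def OptimalParam {X : Type} [MetricSpace X] [MeasurableSpace X] [BorelSpace X]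
    (s : ℝ) (K : Set X) (ψ : ℝ → X) : Prop :=
  ψ '' Icc (0:ℝ) 1 = K ∧
  (∃ K' ⊆ K, ∃ I' ⊆ Icc (0:ℝ) 1,
      μH[s] (K \ K') = 0 ∧ volume (Icc (0:ℝ) 1 \ I') = 0 ∧ BijOn ψ I' K') ∧
  (∀ F : Set ℝ, F ⊆ Icc (0:ℝ) 1 → MeasurableSet F →
      μH[s] (ψ '' F) = μH[s] K * volume F) ∧
  (∀ B : Set X, B ⊆ K → MeasurableSet B →
      volume (ψ ⁻¹' B ∩ Icc (0:ℝ) 1) = (μH[s] K)⁻¹ * μH[s] B) ∧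
  ∃ c' : NNReal, 0 < c' ∧ HolderOnWith c' (Real.toNNReal (1 / s)) ψ (Icc (0:ℝ) 1)

end
namespace PsiHolderAux

open GIFS OGIFS

theorem prefixList_zero {α : Type} (ω : ℕ → α) : prefixList ω 0 = [] := rfl

theorem prefixList_succ {α : Type} (ω : ℕ → α) (n : ℕ) :
    prefixList ω (n + 1) = prefixList ω n ++ [ω n] := by
  unfold prefixList
  rw [List.ofFn_succ']
  simp [List.concat_eq_append]

theorem prefixList_length {α : Type} (ω : ℕ → α) (n : ℕ) : (prefixList ω n).length = n := by
  simp [prefixList]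

theorem prefixList_congr {α : Type} {ω ω' : ℕ → α} (n : ℕ) (hagree : ∀ k < n, ω k = ω' k) :
    prefixList ω n = prefixList ω' n := by
  unfold prefixList
  congr 1
  funext k
  exact hagree k k.isLt

variable {X : Type} [MetricSpace X] {N : ℕ}

theorem pathTgt_nil (G : GIFS X N) (i : Fin N) : G.pathTgt i [] = i := rfl

theorem pathTgt_concat (G : GIFS X N) (i : Fin N) (γ : List G.Edge) (e : G.Edge) :
    G.pathTgt i (γ ++ [e]) = G.tgt e := by
  unfold GIFS.pathTgt
  rw [List.getLast?_concat]
  rfl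

theorem pathMap_nil (G : GIFS X N) : G.pathMap ([] : List G.Edge) = id := rfl

theorem pathMap_cons (G : GIFS X N) (e : G.Edge) (γ : List G.Edge) :
    G.pathMap (e :: γ) = G.g e ∘ G.pathMap γ := rfl

/-- contraction ratio of a path -/
def lratio (G : GIFS X N) (γ : List G.Edge) : ℝ := (γ.map G.r).prod

theorem lratio_nil (G : GIFS X N) : lratio G ([] : List G.Edge) = 1 := rfl

theorem lratio_concat (G : GIFS X N) (γ : List G.Edge) (e : G.Edge) :
    lratio G (γ ++ [e]) = lratio G γ * G.r e := by
  simp [lratio]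

theorem lratio_pos (G : GIFS X N) (γ : List G.Edge) : 0 < lratio G γ := by
  induction γ with
  | nil => norm_num [lratio]
  | cons e γ ih =>
      have := G.r_pos e
      simp only [lratio, List.map_cons, List.prod_cons]
      exact mul_pos this ih

theorem pathMap_dist (G : GIFS X N) (γ : List G.Edge) (a b : X) :
    dist (G.pathMap γ a) (G.pathMap γ b) = lratio G γ * dist a b := by
  induction γ with
  | nil => simp [pathMap_nil, lratio_nil]
  | cons e γ ih =>
      rw [pathMap_cons]
      simp only [Function.comp_apply]
      rw [G.g_sim, ih]
      simp [lratio]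
      ring

end PsiHolderAux
namespace PsiHolderAux

variable {X : Type} [MetricSpace X] {N : ℕ}

/-- δ-power contraction ratio of a path -/
noncomputable def lrd (G : OGIFS X N) (δ : ℝ) (γ : List G.Edge) : ℝ :=
  (γ.map fun e => G.r e ^ δ).prod

theorem lrd_nil (G : OGIFS X N) (δ : ℝ) : lrd G δ ([] : List G.Edge) = 1 := rfl

theorem lrd_pos (G : OGIFS X N) (δ : ℝ) (γ : List G.Edge) : 0 < lrd G δ γ := by
  induction γ with
  | nil => norm_num [lrd]
  | cons e γ ih =>
      simp only [lrd, List.map_cons, List.prod_cons]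
      exact mul_pos (Real.rpow_pos_of_pos (G.r_pos e) δ) ih

theorem lrd_eq_lratio_rpow (G : OGIFS X N) (δ : ℝ) (γ : List G.Edge) :
    lrd G δ γ = lratio G.toGIFS γ ^ δ := by
  induction γ with
  | nil => simp [lrd_nil, lratio_nil]
  | cons e γ ih =>
      simp only [lrd, lratio, List.map_cons, List.prod_cons] at *
      rw [ih]
      exact (Real.mul_rpow (G.r_pos e).le (le_of_lt (lratio_pos G.toGIFS γ))).symm

theorem fPathMap_nil (G : OGIFS X N) (δ : ℝ) (h : Fin N → ℝ) :
    G.fPathMap δ h [] = id := rfl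

theorem fPathMap_cons (G : OGIFS X N) (δ : ℝ) (h : Fin N → ℝ) (e : G.Edge) (γ : List G.Edge) :
    G.fPathMap δ h (e :: γ) = G.fmap δ h e ∘ G.fPathMap δ h γ := rfl

theorem fPathMap_append (G : OGIFS X N) (δ : ℝ) (h : Fin N → ℝ) (γ σ : List G.Edge) :
    G.fPathMap δ h (γ ++ σ) = G.fPathMap δ h γ ∘ G.fPathMap δ h σ := by
  induction γ with
  | nil => simp [fPathMap_nil]
  | cons e γ ih =>
      simp only [List.cons_append, fPathMap_cons, ih]
      rfl

theorem fmap_apply (G : OGIFS X N) (δ : ℝ) (h : Fin N → ℝ) (e : G.Edge) (x : ℝ) :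
    G.fmap δ h e x = G.r e ^ δ * x + G.bCoef δ h e := rfl

theorem fPathMap_eq (G : OGIFS X N) (δ : ℝ) (h : Fin N → ℝ) (γ : List G.Edge) (x : ℝ) :
    G.fPathMap δ h γ x = lrd G δ γ * x + G.fPathMap δ h γ 0 := by
  induction γ generalizing x with
  | nil => simp [fPathMap_nil, lrd_nil]
  | cons e γ ih =>
      simp only [fPathMap_cons, Function.comp_apply, fmap_apply]
      rw [ih x, ih 0]
      simp only [lrd, List.map_cons, List.prod_cons]
      ring

theorem fPathMap_mono (G : OGIFS X N) (δ : ℝ) (h : Fin N → ℝ) (γ : List G.Edge) {x y : ℝ}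
    (hxy : x ≤ y) : G.fPathMap δ h γ x ≤ G.fPathMap δ h γ y := by
  rw [fPathMap_eq G δ h γ x, fPathMap_eq G δ h γ y]
  have := lrd_pos G δ γ
  nlinarith

/-- maximum of a finite set w.r.t. a transitive relation total on the set -/
theorem exists_rel_max {α : Type} (lt : α → α → Prop)
    (htrans : ∀ {a b c}, lt a b → lt b c → lt a c)
    (S : Finset α) (hne : S.Nonempty)
    (htot : ∀ a ∈ S, ∀ b ∈ S, a ≠ b → lt a b ∨ lt b a) :
    ∃ e ∈ S, ∀ f ∈ S, f ≠ e → lt f e := by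
  classical
  revert hne htot
  induction S using Finset.induction_on with
  | empty => exact fun hne htot => absurd hne (by simp)
  | @insert a s ha ih =>
      intro hne htot
      by_cases hs : s.Nonempty
      · obtain ⟨e, heS, hmax⟩ := ih hs
          (fun x hx y hy hxy => htot x (Finset.mem_insert_of_mem hx) y
            (Finset.mem_insert_of_mem hy) hxy)
        have hae : a ≠ e := fun hh => ha (hh ▸ heS)
        rcases htot a (Finset.mem_insert_self a s) e (Finset.mem_insert_of_mem heS) hae with
          h1 | h2
        · refine ⟨e, Finset.mem_insert_of_mem heS, fun f hf hfe => ?_⟩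
          rcases Finset.mem_insert.1 hf with rfl | hf'
          · exact h1
          · exact hmax f hf' hfe
        · refine ⟨a, Finset.mem_insert_self a s, fun f hf hfa => ?_⟩
          rcases Finset.mem_insert.1 hf with rfl | hf'
          · exact absurd rfl hfa
          · by_cases hfe : f = e
            · exact hfe ▸ h2
            · exact htrans (hmax f hf' hfe) h2
      · rw [Finset.not_nonempty_iff_eq_empty] at hs
        subst hs
        refine ⟨a, Finset.mem_insert_self a _, fun f hf hfa => ?_⟩
        simp only [Finset.mem_insert, Finset.notMem_empty, or_false] at hf
        exact absurd hf hfa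

end PsiHolderAux
namespace PsiHolderAux

variable {X : Type} [MetricSpace X] {N : ℕ}

open Classical in
/-- `S_j = ∑_{e ∈ Γ_j} h_{t(e)} r_e^δ`. -/
noncomputable def Ssum (G : OGIFS X N) (δ : ℝ) (h : Fin N → ℝ) (j : Fin N) : ℝ :=
  ∑ e : G.Edge, if G.src e = j then h (G.tgt e) * G.r e ^ δ else 0

theorem bCoef_eq_zero (G : OGIFS X N) (δ : ℝ) (h : Fin N → ℝ) (e : G.Edge)
    (hmin : ∀ e', ¬ G.elt e' e) : G.bCoef δ h e = 0 := by
  classical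
  unfold OGIFS.bCoef
  rw [Finset.sum_eq_zero]
  intro e' _
  simp [hmin e']

theorem bCoef_succ (G : OGIFS X N) (δ : ℝ) (h : Fin N → ℝ) (e e'' : G.Edge)
    (he'' : G.elt e e'') (hleast : ∀ f, G.elt e f → f ≠ e'' → G.elt e'' f) :
    G.bCoef δ h e'' = G.bCoef δ h e + h (G.tgt e) * G.r e ^ δ := by
  classical
  unfold OGIFS.bCoef
  have key : ∀ e' : G.Edge,
      (if G.elt e' e'' then h (G.tgt e') * G.r e' ^ δ else 0) =
      (if G.elt e' e then h (G.tgt e') * G.r e' ^ δ else 0) +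
      (if e' = e then h (G.tgt e') * G.r e' ^ δ else 0) := by
    intro e'
    by_cases h1 : G.elt e' e''
    · have hsrc : G.src e' = G.src e := (G.elt_src h1).trans (G.elt_src he'').symm
      rcases G.elt_total e' e hsrc with h2 | h2 | h2
      · have hne : e' ≠ e := by rintro rfl; exact G.elt_irrefl e' h2
        simp [h1, h2, hne]
      · subst h2
        have : ¬ G.elt e' e' := G.elt_irrefl e'
        simp [h1, this]
      · exfalso
        have hne : e' ≠ e'' := by rintro rfl; exact G.elt_irrefl e' h1
        exact G.elt_irrefl e' (G.elt_trans h1 (hleast e' h2 hne))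
    · have h2 : ¬ G.elt e' e := fun hc => h1 (G.elt_trans hc he'')
      have h3 : e' ≠ e := by rintro rfl; exact h1 he''
      simp [h1, h2, h3]
  rw [Finset.sum_congr rfl (fun e' _ => key e'), Finset.sum_add_distrib]
  congr 1
  simp

theorem Ssum_top (G : OGIFS X N) (δ : ℝ) (h : Fin N → ℝ) (j : Fin N) (e : G.Edge)
    (hj : G.src e = j) (htop : ∀ f, G.src f = j → f ≠ e → G.elt f e) :
    Ssum G δ h j = G.bCoef δ h e + h (G.tgt e) * G.r e ^ δ := by
  classical
  unfold Ssum OGIFS.bCoef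
  have key : ∀ e' : G.Edge,
      (if G.src e' = j then h (G.tgt e') * G.r e' ^ δ else 0) =
      (if G.elt e' e then h (G.tgt e') * G.r e' ^ δ else 0) +
      (if e' = e then h (G.tgt e') * G.r e' ^ δ else 0) := by
    intro e'
    by_cases h1 : G.src e' = j
    · by_cases h2 : e' = e
      · subst h2
        have : ¬ G.elt e' e' := G.elt_irrefl e'
        simp [this, h1]
      · have h3 : G.elt e' e := htop e' h1 h2
        simp [h3, h2, h1]
    · have h2 : ¬ G.elt e' e := fun hc => h1 ((G.elt_src hc).trans hj)
      have h3 : e' ≠ e := by rintro rfl; exact h1 hj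
      simp [h1, h2, h3]
  rw [Finset.sum_congr rfl (fun e' _ => key e'), Finset.sum_add_distrib]
  congr 1
  simp

theorem exists_child (G : OGIFS X N) (δ : ℝ) (h : Fin N → ℝ)
    (hS : ∀ j, 0 < h j ∧ h j ≤ Ssum G δ h j) (j : Fin N) (y : ℝ)
    (h0 : 0 ≤ y) (hy : y ≤ h j) :
    ∃ e, G.src e = j ∧ G.bCoef δ h e ≤ y ∧
      y ≤ G.bCoef δ h e + h (G.tgt e) * G.r e ^ δ := by
  classical
  set Γ : Finset G.Edge := Finset.univ.filter (fun e => G.src e = j) with hΓ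
  have hmemΓ : ∀ e, e ∈ Γ ↔ G.src e = j := by
    intro e; simp [hΓ]
  have hΓne : Γ.Nonempty := by
    by_contra hc
    rw [Finset.not_nonempty_iff_eq_empty] at hc
    have : Ssum G δ h j = 0 := by
      unfold Ssum
      rw [Finset.sum_eq_zero]
      intro e _
      have : G.src e ≠ j := by
        intro hsrc
        have : e ∈ Γ := (hmemΓ e).2 hsrc
        simp [hc] at this
      simp [this]
    have h1 := (hS j).1
    have h2 := (hS j).2
    rw [this] at h2
    linarith
  -- a minimal edge of Γ has bCoef zero
  obtain ⟨e₀, he₀Γ, he₀min⟩ := exists_rel_max (fun a b => G.elt b a)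
    (fun hab hbc => G.elt_trans hbc hab) Γ hΓne
    (fun a ha b hb hab => by
      rcases G.elt_total a b (((hmemΓ a).1 ha).trans ((hmemΓ b).1 hb).symm) with h1 | h1 | h1
      · exact Or.inr h1
      · exact absurd h1 hab
      · exact Or.inl h1)
  have hb₀ : G.bCoef δ h e₀ = 0 := by
    apply bCoef_eq_zero
    intro e' he'
    have he'Γ : e' ∈ Γ := (hmemΓ e').2 ((G.elt_src he').trans ((hmemΓ e₀).1 he₀Γ))
    have hne : e' ≠ e₀ := by rintro rfl; exact G.elt_irrefl e' he'
    exact G.elt_irrefl e' (G.elt_trans he' (he₀min e' he'Γ hne))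
  set T : Finset G.Edge := Γ.filter (fun e => G.bCoef δ h e ≤ y) with hT
  have hTne : T.Nonempty := ⟨e₀, by simp [hT, hb₀, h0, he₀Γ]⟩
  obtain ⟨e, heT, hemax⟩ := exists_rel_max G.elt (fun hab hbc => G.elt_trans hab hbc) T hTne
    (fun a ha b hb hab => by
      have ha' : a ∈ Γ := Finset.mem_of_mem_filter a ha
      have hb' : b ∈ Γ := Finset.mem_of_mem_filter b hb
      rcases G.elt_total a b (((hmemΓ a).1 ha').trans ((hmemΓ b).1 hb').symm) with h1 | h1 | h1
      · exact Or.inl h1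
      · exact absurd h1 hab
      · exact Or.inr h1)
  have heΓ : e ∈ Γ := Finset.mem_of_mem_filter e heT
  have hesrc : G.src e = j := (hmemΓ e).1 heΓ
  have heb : G.bCoef δ h e ≤ y := by
    have := heT
    rw [hT, Finset.mem_filter] at this
    exact this.2
  refine ⟨e, hesrc, heb, ?_⟩
  by_contra hlt
  push_neg at hlt
  set U : Finset G.Edge := Γ.filter (fun f => G.elt e f) with hU
  by_cases hUne : U.Nonempty
  · obtain ⟨e'', he''U, he''min⟩ := exists_rel_max (fun a b => G.elt b a)
      (fun hab hbc => G.elt_trans hbc hab) U hUne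
      (fun a ha b hb hab => by
        have ha' : a ∈ Γ := Finset.mem_of_mem_filter a ha
        have hb' : b ∈ Γ := Finset.mem_of_mem_filter b hb
        rcases G.elt_total a b (((hmemΓ a).1 ha').trans ((hmemΓ b).1 hb').symm) with h1 | h1 | h1
        · exact Or.inr h1
        · exact absurd h1 hab
        · exact Or.inl h1)
    have he'' : G.elt e e'' := by
      have := he''U
      rw [hU, Finset.mem_filter] at this
      exact this.2
    have hb'' : G.bCoef δ h e'' = G.bCoef δ h e + h (G.tgt e) * G.r e ^ δ := by
      apply bCoef_succ G δ h e e'' he''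
      intro f hf hfne
      have hfU : f ∈ U := by
        rw [hU, Finset.mem_filter]
        exact ⟨(hmemΓ f).2 ((G.elt_src hf).symm.trans hesrc), hf⟩
      exact he''min f hfU hfne
    have he''T : e'' ∈ T := by
      rw [hT, Finset.mem_filter]
      refine ⟨(hmemΓ e'').2 ((G.elt_src he'').symm.trans hesrc), ?_⟩
      rw [hb'']
      exact le_of_lt hlt
    have hne : e'' ≠ e := by rintro rfl; exact G.elt_irrefl e'' he''
    exact G.elt_irrefl e (G.elt_trans he'' (hemax e'' he''T hne))
  · have htop : ∀ f, G.src f = j → f ≠ e → G.elt f e := by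
      intro f hf hfne
      rcases G.elt_total f e (hf.trans hesrc.symm) with h1 | h1 | h1
      · exact h1
      · exact absurd h1 hfne
      · exfalso
        exact hUne ⟨f, by rw [hU, Finset.mem_filter]; exact ⟨(hmemΓ f).2 hf, h1⟩⟩
    have := Ssum_top G δ h j e hesrc htop
    have hcontra := lt_of_le_of_lt (hy.trans (hS j).2) (this ▸ hlt)
    exact lt_irrefl _ hcontra

end PsiHolderAux
namespace PsiHolderAux

open Set

variable {X : Type} [MetricSpace X] {N : ℕ}

theorem pathTgt_prefix_succ (G : OGIFS X N) (i : Fin N) (ω : ℕ → G.Edge) (m : ℕ) :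
    G.toGIFS.pathTgt i (prefixList ω (m + 1)) = G.tgt (ω m) := by
  rw [prefixList_succ, pathTgt_concat]

theorem code_exists (G : OGIFS X N) (δ : ℝ) (h : Fin N → ℝ)
    (hS : ∀ j, 0 < h j ∧ h j ≤ Ssum G δ h j) (j : Fin N) (y : ℝ)
    (h0 : 0 ≤ y) (hy : y ≤ h j) :
    ∃ ω : ℕ → G.Edge, G.src (ω 0) = j ∧ (∀ n, G.tgt (ω n) = G.src (ω (n + 1))) ∧
      ∀ n, y ∈ G.fPathSet δ h j (prefixList ω n) := by
  classical
  have key : ∀ s : (v : Fin N) × {z : ℝ // 0 ≤ z ∧ z ≤ h v},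
      ∃ p : ((v : Fin N) × {z : ℝ // 0 ≤ z ∧ z ≤ h v}) × G.Edge,
        G.src p.2 = s.1 ∧ G.tgt p.2 = p.1.1 ∧ G.fmap δ h p.2 p.1.2.1 = s.2.1 := by
    rintro ⟨v, z, hz0, hzh⟩
    obtain ⟨e, he1, he2, he3⟩ := exists_child G δ h hS v z hz0 hzh
    have hrpos : (0:ℝ) < G.r e ^ δ := Real.rpow_pos_of_pos (G.r_pos e) δ
    refine ⟨⟨⟨G.tgt e, ⟨(z - G.bCoef δ h e) / G.r e ^ δ, ?_, ?_⟩⟩, e⟩, he1, rfl, ?_⟩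
    · exact div_nonneg (sub_nonneg.2 he2) hrpos.le
    · rw [div_le_iff₀ hrpos]
      have : h (G.tgt e) * G.r e ^ δ = G.r e ^ δ * h (G.tgt e) := mul_comm _ _
      linarith [he3, this ▸ he3]
    · show G.r e ^ δ * ((z - G.bCoef δ h e) / G.r e ^ δ) + G.bCoef δ h e = z
      field_simp
      ring
  choose next hnext1 hnext2 hnext3 using key
  let st : ℕ → (v : Fin N) × {z : ℝ // 0 ≤ z ∧ z ≤ h v} :=
    fun n => Nat.rec (motive := fun _ => (v : Fin N) × {z : ℝ // 0 ≤ z ∧ z ≤ h v})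
      ⟨j, ⟨y, h0, hy⟩⟩ (fun _ s => (next s).1) n
  let ω : ℕ → G.Edge := fun n => (next (st n)).2
  have hst0 : st 0 = ⟨j, ⟨y, h0, hy⟩⟩ := rfl
  have hstsucc : ∀ n, st (n + 1) = (next (st n)).1 := fun n => rfl
  have inv : ∀ n, G.toGIFS.pathTgt j (prefixList ω n) = (st n).1 ∧
      G.fPathMap δ h (prefixList ω n) ((st n).2 : ℝ) = y := by
    intro n
    induction n with
    | zero => exact ⟨rfl, rfl⟩
    | succ n ih =>
        constructor
        · rw [pathTgt_prefix_succ, hstsucc]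
          exact hnext2 (st n)
        · rw [prefixList_succ, fPathMap_append]
          have : G.fPathMap δ h [ω n] ((st (n+1)).2 : ℝ) = (st n).2 := by
            show G.fmap δ h (ω n) ((st (n+1)).2 : ℝ) = (st n).2
            rw [hstsucc]
            exact hnext3 (st n)
          simp only [Function.comp_apply]
          rw [this, ih.2]
  refine ⟨ω, ?_, ?_, ?_⟩
  · exact hnext1 (st 0)
  · intro n
    have h1 := hnext2 (st n)
    have h2 := hnext1 (st (n + 1))
    rw [hstsucc] at h2
    exact h1.trans h2.symm
  · intro n
    exact ⟨(st n).2, by rw [(inv n).1]; exact ⟨(st n).2.2.1, (st n).2.2.2⟩, (inv n).2⟩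

theorem glue (G : OGIFS X N) {i : Fin N} (ω τ : ℕ → G.Edge)
    (hω0 : G.src (ω 0) = i) (hωc : ∀ k, G.tgt (ω k) = G.src (ω (k + 1)))
    (n : ℕ) (hτ0 : G.src (τ 0) = G.toGIFS.pathTgt i (prefixList ω n))
    (hτc : ∀ k, G.tgt (τ k) = G.src (τ (k + 1))) :
    ∃ ω' : ℕ → G.Edge, G.src (ω' 0) = i ∧ (∀ k, G.tgt (ω' k) = G.src (ω' (k + 1))) ∧
      (∀ m, prefixList ω' (n + m) = prefixList ω n ++ prefixList τ m) ∧
      (∀ k, k < n → ω' k = ω k) := by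
  classical
  refine ⟨fun k => if k < n then ω k else τ (k - n), ?_, ?_, ?_, ?_⟩
  · by_cases h0 : 0 < n
    · simp [h0, hω0]
    · have hn : n = 0 := by omega
      subst hn
      simpa [prefixList_zero, pathTgt_nil] using hτ0
  · intro k
    show G.tgt (if k < n then ω k else τ (k - n)) =
      G.src (if k + 1 < n then ω (k + 1) else τ (k + 1 - n))
    by_cases h2 : k < n
    · by_cases h1 : k + 1 < n
      · rw [if_pos h2, if_pos h1]
        exact hωc k
      · have h3 : k + 1 = n := by omega
        rw [if_pos h2, if_neg h1]
        have h4 : k + 1 - n = 0 := by omega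
        rw [h4, hτ0, ← h3, pathTgt_prefix_succ]
    · have h1 : ¬ (k + 1 < n) := by omega
      rw [if_neg h2, if_neg h1]
      have h4 : k + 1 - n = (k - n) + 1 := by omega
      rw [h4]
      exact hτc (k - n)
  · intro m
    induction m with
    | zero =>
        simp only [Nat.add_zero, prefixList_zero, List.append_nil]
        apply prefixList_congr
        intro k hk
        simp [hk]
    | succ m ih =>
        rw [← Nat.add_assoc, prefixList_succ, ih, prefixList_succ, List.append_assoc]
        congr 2
        have h1 : ¬ (n + m < n) := by omega
        have h2 : n + m - n = m := by omega
        simp [h1, h2]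
  · intro k hk
    simp [hk]

theorem list_prod_le_pow (Q : ℝ) (hQ0 : 0 ≤ Q) (l : List ℝ)
    (hl : ∀ a ∈ l, 0 ≤ a ∧ a ≤ Q) : l.prod ≤ Q ^ l.length := by
  induction l with
  | nil => simp
  | cons a l ih =>
      have hprod : 0 ≤ l.prod := List.prod_nonneg (fun b hb => (hl b (List.mem_cons_of_mem a hb)).1)
      have ha := hl a List.mem_cons_self
      have ihl := ih (fun b hb => hl b (List.mem_cons_of_mem a hb))
      simp only [List.prod_cons, List.length_cons, pow_succ]
      calc a * l.prod ≤ Q * l.prod := mul_le_mul_of_nonneg_right ha.2 hprod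
        _ ≤ Q * Q ^ l.length := mul_le_mul_of_nonneg_left ihl hQ0
        _ = Q ^ l.length * Q := mul_comm _ _

/-- two points lying in a common nested sequence of cylinder intervals coincide -/
theorem coding_point_eq (G : OGIFS X N) (δ : ℝ) (h : Fin N → ℝ)
    (hmx : ℝ) (hhmax : ∀ j, h j ≤ hmx)
    (Q : ℝ) (hQ0 : 0 ≤ Q) (hQ1 : Q < 1) (hrQ : ∀ e : G.Edge, G.r e ^ δ ≤ Q)
    (i : Fin N) (ω : ℕ → G.Edge) (x x' : ℝ) (n₀ : ℕ)
    (hx : ∀ n, n₀ ≤ n → x ∈ G.fPathSet δ h i (prefixList ω n))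
    (hx' : ∀ n, n₀ ≤ n → x' ∈ G.fPathSet δ h i (prefixList ω n)) :
    x = x' := by
  have key : ∀ n, n₀ ≤ n → |x - x'| ≤ hmx * Q ^ n := by
    intro n hn
    obtain ⟨a, ha, hae⟩ := hx n hn
    obtain ⟨b, hb, hbe⟩ := hx' n hn
    set γ := prefixList ω n with hγ
    set v := G.toGIFS.pathTgt i γ with hv
    have hxx : x - x' = lrd G δ γ * (a - b) := by
      rw [← hae, ← hbe, fPathMap_eq G δ h γ a, fPathMap_eq G δ h γ b]
      ring
    have hab : |a - b| ≤ h v := by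
      rw [abs_le]
      rcases ha with ⟨ha1, ha2⟩
      rcases hb with ⟨hb1, hb2⟩
      constructor <;> linarith
    have hlrd : lrd G δ γ ≤ Q ^ n := by
      have := list_prod_le_pow Q hQ0 (γ.map fun e => G.r e ^ δ)
        (by
          intro c hc
          rw [List.mem_map] at hc
          obtain ⟨e, _, rfl⟩ := hc
          exact ⟨(Real.rpow_pos_of_pos (G.r_pos e) δ).le, hrQ e⟩)
      rwa [List.length_map, hγ, prefixList_length] at this
    have hlrdpos := lrd_pos G δ γ
    have hQn : (0:ℝ) ≤ Q ^ n := pow_nonneg hQ0 n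
    calc |x - x'| = lrd G δ γ * |a - b| := by
          rw [hxx, abs_mul, abs_of_pos hlrdpos]
      _ ≤ Q ^ n * h v := by
          apply mul_le_mul hlrd hab (abs_nonneg _) hQn
      _ ≤ Q ^ n * hmx := by
          apply mul_le_mul_of_nonneg_left (hhmax v) hQn
      _ = hmx * Q ^ n := mul_comm _ _
  have htend : Filter.Tendsto (fun n => hmx * Q ^ n) Filter.atTop (nhds 0) := by
    simpa using (tendsto_pow_atTop_nhds_zero_of_lt_one hQ0 hQ1).const_mul hmx
  have habs : |x - x'| ≤ 0 :=
    ge_of_tendsto htend (Filter.eventually_atTop.2 ⟨n₀, key⟩)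
  have h0 : x - x' = 0 := abs_nonpos_iff.1 habs
  linarith

end PsiHolderAux
namespace PsiHolderAux

open Set MeasureTheory
open scoped NNReal ENNReal

theorem h_le_Ssum {d N : ℕ} (G : OGIFS (EuclideanSpace ℝ (Fin d)) N)
    (E : Fin N → Set (EuclideanSpace ℝ (Fin d))) (hE : G.toGIFS.IsInvariant E)
    (δ : ℝ) (hδpos : 0 < δ)
    (hfin : ∀ j, 0 < μH[δ] (E j) ∧ μH[δ] (E j) < ⊤)
    (h : Fin N → ℝ) (hh : ∀ j, h j = (μH[δ] (E j)).toReal) (j : Fin N) :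
    0 < h j ∧ h j ≤ Ssum G δ h j := by
  classical
  have hpos : 0 < h j := by
    rw [hh]
    exact ENNReal.toReal_pos (hfin j).1.ne' (hfin j).2.ne
  refine ⟨hpos, ?_⟩
  set s : Finset G.Edge := Finset.univ.filter (fun e => G.src e = j) with hs
  have hsub : E j ⊆ ⋃ e ∈ s, G.g e '' E (G.tgt e) := by
    conv_lhs => rw [hE.2.2 j]
    intro x hx
    simp only [Set.mem_iUnion, Set.mem_setOf_eq] at hx
    obtain ⟨e, he, hxe⟩ := hx
    simp only [Set.mem_iUnion]
    exact ⟨e, by simp [hs, he], hxe⟩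
  have hterm : ∀ e : G.Edge, μH[δ] (G.g e '' E (G.tgt e)) ≤
      ((Real.toNNReal (G.r e) : ℝ≥0∞) ^ δ) * μH[δ] (E (G.tgt e)) := by
    intro e
    have hglip : LipschitzWith (Real.toNNReal (G.r e)) (G.g e) := by
      apply LipschitzWith.of_dist_le_mul
      intro x y
      rw [G.g_sim, Real.coe_toNNReal _ (G.r_pos e).le]
    exact hglip.hausdorffMeasure_image_le hδpos.le _
  have main : μH[δ] (E j) ≤
      ∑ e ∈ s, ((Real.toNNReal (G.r e) : ℝ≥0∞) ^ δ) * μH[δ] (E (G.tgt e)) :=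
    le_trans (measure_mono hsub)
      (le_trans (measure_biUnion_finset_le _ _) (Finset.sum_le_sum fun e _ => hterm e))
  have hne : ∀ e ∈ s, ((Real.toNNReal (G.r e) : ℝ≥0∞) ^ δ) * μH[δ] (E (G.tgt e)) ≠ ⊤ := by
    intro e _
    apply ENNReal.mul_ne_top
    · exact (ENNReal.rpow_lt_top_of_nonneg hδpos.le ENNReal.coe_ne_top).ne
    · exact (hfin (G.tgt e)).2.ne
  have hsumne : (∑ e ∈ s, ((Real.toNNReal (G.r e) : ℝ≥0∞) ^ δ) * μH[δ] (E (G.tgt e))) ≠ ⊤ := by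
    rw [← lt_top_iff_ne_top]
    apply ENNReal.sum_lt_top.2
    intro e hes
    exact lt_top_iff_ne_top.2 (hne e hes)
  have htermReal : ∀ e : G.Edge,
      (((Real.toNNReal (G.r e) : ℝ≥0∞) ^ δ) * μH[δ] (E (G.tgt e))).toReal =
      h (G.tgt e) * G.r e ^ δ := by
    intro e
    rw [ENNReal.toReal_mul, ← ENNReal.toReal_rpow]
    rw [hh (G.tgt e)]
    have : ((Real.toNNReal (G.r e) : ℝ≥0∞)).toReal = G.r e := by
      simp [Real.coe_toNNReal _ (G.r_pos e).le]
    rw [this, mul_comm]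
  calc h j = (μH[δ] (E j)).toReal := hh j
    _ ≤ (∑ e ∈ s, ((Real.toNNReal (G.r e) : ℝ≥0∞) ^ δ) * μH[δ] (E (G.tgt e))).toReal :=
        ENNReal.toReal_mono hsumne main
    _ = ∑ e ∈ s, (((Real.toNNReal (G.r e) : ℝ≥0∞) ^ δ) * μH[δ] (E (G.tgt e))).toReal :=
        ENNReal.toReal_sum hne
    _ = ∑ e ∈ s, h (G.tgt e) * G.r e ^ δ := Finset.sum_congr rfl (fun e _ => htermReal e)
    _ = Ssum G δ h j := by
        unfold Ssum
        rw [Finset.sum_filter]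

end PsiHolderAux
namespace PsiHolderAux

open Set

variable {X : Type} [MetricSpace X] {N : ℕ}

theorem pathTgt_append (G : GIFS X N) (i : Fin N) (γ σ : List G.Edge) :
    G.pathTgt i (γ ++ σ) = G.pathTgt (G.pathTgt i γ) σ := by
  induction σ using List.reverseRecOn with
  | nil => simp [pathTgt_nil]
  | append_singleton σ' e _ =>
      rw [← List.append_assoc, pathTgt_concat, pathTgt_concat]

theorem fPathSet_append (G : OGIFS X N) (δ : ℝ) (h : Fin N → ℝ) (i : Fin N)
    (γ σ : List G.Edge) :
    G.fPathSet δ h i (γ ++ σ) =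
      G.fPathMap δ h γ '' G.fPathSet δ h (G.toGIFS.pathTgt i γ) σ := by
  unfold OGIFS.fPathSet
  rw [fPathMap_append, pathTgt_append, Set.image_comp]

theorem mem_fPathSet_of_between (G : OGIFS X N) (δ : ℝ) (h : Fin N → ℝ) (i : Fin N)
    (γ : List G.Edge) (x : ℝ) (hx1 : G.fPathMap δ h γ 0 ≤ x)
    (hx2 : x ≤ G.fPathMap δ h γ (h (G.toGIFS.pathTgt i γ))) :
    x ∈ G.fPathSet δ h i γ := by
  have hpos := lrd_pos G δ γ
  refine ⟨(x - G.fPathMap δ h γ 0) / lrd G δ γ, ⟨?_, ?_⟩, ?_⟩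
  · exact div_nonneg (sub_nonneg.2 hx1) hpos.le
  · rw [div_le_iff₀ hpos]
    rw [fPathMap_eq G δ h γ (h (G.toGIFS.pathTgt i γ))] at hx2
    linarith [hx2]
  · rw [fPathMap_eq G δ h γ]
    field_simp
    ring

theorem mem_fPathSet_bounds (G : OGIFS X N) (δ : ℝ) (h : Fin N → ℝ) (i : Fin N)
    (γ : List G.Edge) (x : ℝ) (hx : x ∈ G.fPathSet δ h i γ) :
    G.fPathMap δ h γ 0 ≤ x ∧ x ≤ G.fPathMap δ h γ (h (G.toGIFS.pathTgt i γ)) := by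
  obtain ⟨z, hz, rfl⟩ := hx
  exact ⟨fPathMap_mono G δ h γ hz.1, fPathMap_mono G δ h γ hz.2⟩

theorem src_prefix (G : OGIFS X N) {i : Fin N} (ω : ℕ → G.Edge)
    (hω0 : G.src (ω 0) = i) (hωc : ∀ k, G.tgt (ω k) = G.src (ω (k + 1))) (m : ℕ) :
    G.src (ω m) = G.toGIFS.pathTgt i (prefixList ω m) := by
  cases m with
  | zero => exact hω0
  | succ m => rw [pathTgt_prefix_succ]; exact (hωc m).symm

theorem bCoef_nonneg (G : OGIFS X N) (δ : ℝ) (h : Fin N → ℝ) (hpos : ∀ j, 0 ≤ h j)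
    (e : G.Edge) : 0 ≤ G.bCoef δ h e := by
  classical
  unfold OGIFS.bCoef
  apply Finset.sum_nonneg
  intro e' _
  by_cases he' : G.elt e' e
  · simp only [he', if_true]
    exact mul_nonneg (hpos _) (Real.rpow_pos_of_pos (G.r_pos e') δ).le
  · simp [he']

theorem min_edge_exists (G : OGIFS X N) (δ : ℝ) (h : Fin N → ℝ)
    (hS : ∀ j, 0 < h j ∧ h j ≤ Ssum G δ h j) (v : Fin N) :
    ∃ e, G.src e = v ∧ G.bCoef δ h e = 0 := by
  obtain ⟨e, he1, he2, _⟩ := exists_child G δ h hS v 0 le_rfl (hS v).1.le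
  exact ⟨e, he1, le_antisymm he2 (bCoef_nonneg G δ h (fun j => (hS j).1.le) e)⟩

theorem graft (G : OGIFS X N) (δ : ℝ) (h : Fin N → ℝ)
    (hS : ∀ j, 0 < h j ∧ h j ≤ Ssum G δ h j) {i : Fin N} (ω : ℕ → G.Edge)
    (hω0 : G.src (ω 0) = i) (hωc : ∀ k, G.tgt (ω k) = G.src (ω (k + 1)))
    (n : ℕ) (x : ℝ) (hx : x ∈ G.fPathSet δ h i (prefixList ω n)) :
    ∃ ω' : ℕ → G.Edge, G.src (ω' 0) = i ∧ (∀ k, G.tgt (ω' k) = G.src (ω' (k + 1))) ∧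
      prefixList ω' n = prefixList ω n ∧
      ∀ m, n ≤ m → x ∈ G.fPathSet δ h i (prefixList ω' m) := by
  obtain ⟨xv, hxv, hxe⟩ := hx
  obtain ⟨τ, hτ0, hτc, hτmem⟩ := code_exists G δ h hS
    (G.toGIFS.pathTgt i (prefixList ω n)) xv hxv.1 hxv.2
  obtain ⟨ω', hω'0, hω'c, hω'pre, hω'agree⟩ := glue G ω τ hω0 hωc n hτ0 hτc
  have hpren : prefixList ω' n = prefixList ω n := by
    have := hω'pre 0
    rwa [prefixList_zero, List.append_nil] at this
  refine ⟨ω', hω'0, hω'c, hpren, ?_⟩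
  intro m hm
  obtain ⟨k, rfl⟩ : ∃ k, m = n + k := ⟨m - n, by omega⟩
  rw [hω'pre k, fPathSet_append]
  exact ⟨xv, hτmem k, hxe⟩

theorem dist_le_of_mem_pathSet (G : GIFS X N) (E : Fin N → Set X)
    (hbE : ∀ j, Bornology.IsBounded (E j)) (i : Fin N) (γ : List G.Edge) {p q : X}
    (hp : p ∈ G.pathSet E i γ) (hq : q ∈ G.pathSet E i γ) :
    dist p q ≤ lratio G γ * Metric.diam (E (G.pathTgt i γ)) := by
  obtain ⟨ap, hap, rfl⟩ := hp
  obtain ⟨aq, haq, rfl⟩ := hq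
  rw [pathMap_dist]
  exact mul_le_mul_of_nonneg_left
    (Metric.dist_le_diam_of_mem (hbE _) hap haq) (lratio_pos G γ).le

end PsiHolderAux
noncomputable section
open PsiHolderAux in
/-- The map `ψ_i = π_i ∘ ρ_i⁻¹ : F_i → E_i` is `1/δ`-Hölder continuous:
`|ψ_i(x₁) − ψ_i(x₂)| ≤ 2 D r_min⁻¹ h^{-1/δ} |x₁ − x₂|^{1/δ}`, where
`D = max_j diam E_j`, `r_min = min_e r_e` and `h = min_j h_j`. -/
theorem psi_holder {d N : ℕ} (G : OGIFS (EuclideanSpace ℝ (Fin d)) N)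
    (E : Fin N → Set (EuclideanSpace ℝ (Fin d))) (hE : G.toGIFS.IsInvariant E) (hlin : G.IsLinear E)
    (hosc : G.toGIFS.OSC) (δ : ℝ) (hδ : G.toGIFS.IsSimDim δ)
    (hfin : ∀ j, 0 < μH[δ] (E j) ∧ μH[δ] (E j) < ⊤)
    (h : Fin N → ℝ) (hh : ∀ j, h j = (μH[δ] (E j)).toReal) (i : Fin N)
    (π : G.toGIFS.InfPath i → EuclideanSpace ℝ (Fin d)) (hπ : G.toGIFS.IsCoding E i π)
    (ρ : G.toGIFS.InfPath i → ℝ) (hρ : G.IsFCoding δ h i ρ)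
    (ψ : ℝ → EuclideanSpace ℝ (Fin d)) (hψ : ∀ ω : G.toGIFS.InfPath i, ψ (ρ ω) = π ω) :
    ∀ x₁ ∈ Icc (0:ℝ) (h i), ∀ x₂ ∈ Icc (0:ℝ) (h i),
      dist (ψ x₁) (ψ x₂) ≤
        2 * (⨆ j, Metric.diam (E j)) * (⨅ e : G.Edge, G.r e)⁻¹ *
          (⨅ j, h j) ^ (-(1 / δ)) * |x₁ - x₂| ^ (1 / δ) := by
  classical
  obtain ⟨hδpos, -⟩ := hδ
  have hδne : δ ≠ 0 := ne_of_gt hδpos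
  have hcov : ∀ j, 0 < h j ∧ h j ≤ Ssum G δ h j := h_le_Ssum G E hE δ hδpos hfin h hh
  have hEdge : Nonempty G.Edge := by
    by_contra hc
    rw [not_nonempty_iff] at hc
    have h0 : Ssum G δ h i = 0 := by
      unfold Ssum
      rw [Finset.univ_eq_empty, Finset.sum_empty]
    have h1 := (hcov i).1
    have h2 := (hcov i).2
    rw [h0] at h2
    linarith
  haveI := hEdge
  haveI : Nonempty (Fin N) := ⟨i⟩
  -- r_min facts
  have hbddr : BddBelow (Set.range G.r) := ⟨0, by rintro y ⟨e, rfl⟩; exact (G.r_pos e).le⟩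
  obtain ⟨e₀, he₀⟩ := Finite.exists_min G.r
  set rmin := ⨅ e : G.Edge, G.r e with hrmindef
  have hrmin_le : ∀ e : G.Edge, rmin ≤ G.r e := fun e => ciInf_le hbddr e
  have hrmin_pos : 0 < rmin := lt_of_lt_of_le (G.r_pos e₀) (le_ciInf he₀)
  -- h_min facts
  have hbddh : BddBelow (Set.range h) := ⟨0, by rintro y ⟨j, rfl⟩; exact (hcov j).1.le⟩
  obtain ⟨j₀, hj₀⟩ := Finite.exists_min h
  set hmn := ⨅ j, h j with hmndef
  have hmin_le : ∀ j, hmn ≤ h j := fun j => ciInf_le hbddh j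
  have hminpos : 0 < hmn := lt_of_lt_of_le (hcov j₀).1 (le_ciInf hj₀)
  -- h_max facts
  set hmx := ⨆ j, h j with hmxdef
  have hmax_le : ∀ j, h j ≤ hmx :=
    fun j => le_ciSup (Set.Finite.bddAbove (Set.finite_range h)) j
  -- q facts
  set q := ⨆ e : G.Edge, G.r e with hqdef
  have hq_ge : ∀ e : G.Edge, G.r e ≤ q :=
    fun e => le_ciSup (Set.Finite.bddAbove (Set.finite_range G.r)) e
  obtain ⟨e₁, he₁⟩ := Finite.exists_max G.r
  have hq0 : 0 < q := lt_of_lt_of_le (G.r_pos e₀) (hq_ge e₀)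
  have hq1 : q < 1 := lt_of_le_of_lt (ciSup_le he₁) (G.r_lt_one e₁)
  set Q := q ^ δ with hQdef
  have hQ0 : 0 ≤ Q := (Real.rpow_pos_of_pos hq0 δ).le
  have hQ1 : Q < 1 := Real.rpow_lt_one hq0.le hq1 hδpos
  have hrQ : ∀ e : G.Edge, G.r e ^ δ ≤ Q :=
    fun e => Real.rpow_le_rpow (G.r_pos e).le (hq_ge e) hδpos.le
  -- D facts
  set D := ⨆ j, Metric.diam (E j) with hDdef
  have hD_ge : ∀ j, Metric.diam (E j) ≤ D :=
    fun j => le_ciSup (f := fun j => Metric.diam (E j)) (Set.Finite.bddAbove (Set.finite_range _)) j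
  have hD0 : 0 ≤ D := le_trans Metric.diam_nonneg (hD_ge i)
  have hbE : ∀ j, Bornology.IsBounded (E j) := fun j => (hE.2.1 j).isBounded
  -- products of ratios along prefixes are ≤ q ^ n
  have hPq : ∀ (σ : ℕ → G.Edge) (n : ℕ), lratio G.toGIFS (prefixList σ n) ≤ q ^ n := by
    intro σ n
    have := list_prod_le_pow q hq0.le ((prefixList σ n).map G.r)
      (by
        intro c hc
        rw [List.mem_map] at hc
        obtain ⟨e, _, rfl⟩ := hc
        exact ⟨(G.r_pos e).le, hq_ge e⟩)
    rwa [List.length_map, prefixList_length] at this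
  suffices key : ∀ y₁, y₁ ∈ Icc (0:ℝ) (h i) → ∀ y₂, y₂ ∈ Icc (0:ℝ) (h i) → y₁ ≤ y₂ →
      dist (ψ y₁) (ψ y₂) ≤ 2 * D * rmin⁻¹ * hmn ^ (-(1/δ)) * (y₂ - y₁) ^ (1/δ) by
    intro x₁ hx₁ x₂ hx₂
    rcases le_total x₁ x₂ with hle | hle
    · have hx := key x₁ hx₁ x₂ hx₂ hle
      have habs : |x₁ - x₂| = x₂ - x₁ := by
        rw [abs_sub_comm]
        exact abs_of_nonneg (sub_nonneg.2 hle)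
      rwa [habs]
    · have hx := key x₂ hx₂ x₁ hx₁ hle
      rw [dist_comm] at hx
      have habs : |x₁ - x₂| = x₁ - x₂ := abs_of_nonneg (sub_nonneg.2 hle)
      rwa [habs]
  intro y₁ hy₁ y₂ hy₂ hle
  rcases eq_or_lt_of_le hle with rfl | hlt
  · rw [sub_self, Real.zero_rpow (one_div_ne_zero hδne), mul_zero, dist_self]
  set t := y₂ - y₁ with htdef
  have htpos : 0 < t := sub_pos.2 hlt
  set lam := (t / hmn) ^ (1/δ) / rmin with hlamdef
  have hlampos : 0 < lam :=
    div_pos (Real.rpow_pos_of_pos (div_pos htpos hminpos) _) hrmin_pos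
  have hlamkey : (lam * rmin) ^ δ * hmn = t := by
    rw [hlamdef, div_mul_cancel₀ _ (ne_of_gt hrmin_pos),
      ← Real.rpow_mul (div_nonneg htpos.le hminpos.le), one_div_mul_cancel hδne,
      Real.rpow_one, div_mul_cancel₀ _ (ne_of_gt hminpos)]
  have hfinal : 2 * D * lam = 2 * D * rmin⁻¹ * hmn ^ (-(1/δ)) * t ^ (1/δ) := by
    rw [hlamdef, Real.div_rpow htpos.le hminpos.le, Real.rpow_neg hminpos.le]
    ring
  -- the two-points-in-one-cylinder bound
  have hpair : ∀ σ : ℕ → G.Edge, G.src (σ 0) = i → (∀ k, G.tgt (σ k) = G.src (σ (k+1))) →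
      ∀ n, lratio G.toGIFS (prefixList σ n) ≤ lam →
      ∀ u, u ∈ G.fPathSet δ h i (prefixList σ n) →
      ∀ w, w ∈ G.fPathSet δ h i (prefixList σ n) →
      dist (ψ u) (ψ w) ≤ D * lam := by
    intro σ hσ0 hσc n hσn u hu w hw
    obtain ⟨σu, hσu0, hσuc, hσupre, hσumem⟩ := graft G δ h hcov σ hσ0 hσc n u hu
    obtain ⟨σw, hσw0, hσwc, hσwpre, hσwmem⟩ := graft G δ h hcov σ hσ0 hσc n w hw
    set Pu : G.toGIFS.InfPath i := ⟨σu, hσu0, hσuc⟩ with hPudef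
    set Pw : G.toGIFS.InfPath i := ⟨σw, hσw0, hσwc⟩ with hPwdef
    have hρu : ρ Pu = u := coding_point_eq G δ h hmx hmax_le Q hQ0 hQ1 hrQ i σu (ρ Pu) u n
      (fun k _ => hρ Pu k) (fun k hk => hσumem k hk)
    have hρw : ρ Pw = w := coding_point_eq G δ h hmx hmax_le Q hQ0 hQ1 hrQ i σw (ρ Pw) w n
      (fun k _ => hρ Pw k) (fun k hk => hσwmem k hk)
    have hπu : π Pu ∈ G.toGIFS.pathSet E i (prefixList σ n) := by
      have := hπ Pu n
      rwa [show prefixList Pu.1 n = prefixList σ n from hσupre] at this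
    have hπw : π Pw ∈ G.toGIFS.pathSet E i (prefixList σ n) := by
      have := hπ Pw n
      rwa [show prefixList Pw.1 n = prefixList σ n from hσwpre] at this
    have hdist := dist_le_of_mem_pathSet G.toGIFS E hbE i (prefixList σ n) hπu hπw
    calc dist (ψ u) (ψ w) = dist (π Pu) (π Pw) := by rw [← hρu, ← hρw, hψ Pu, hψ Pw]
      _ ≤ lratio G.toGIFS (prefixList σ n) *
          Metric.diam (E (G.toGIFS.pathTgt i (prefixList σ n))) := hdist
      _ ≤ lam * D := by
          apply mul_le_mul hσn (hD_ge _) Metric.diam_nonneg hlampos.le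
      _ = D * lam := mul_comm _ _
  -- coding of y₁
  obtain ⟨ω, hω0, hωc, hωmem⟩ := code_exists G δ h hcov i y₁ hy₁.1 hy₁.2
  -- stopping time for ω
  have hex : ∃ n, lratio G.toGIFS (prefixList ω n) ≤ lam := by
    obtain ⟨n₁, hn₁⟩ := exists_pow_lt_of_lt_one hlampos hq1
    exact ⟨n₁, le_trans (hPq ω n₁) hn₁.le⟩
  set n₁ := Nat.find hex with hn₁def
  have hn₁le : lratio G.toGIFS (prefixList ω n₁) ≤ lam := Nat.find_spec hex
  have hn₁min : ∀ m, m < n₁ → lam < lratio G.toGIFS (prefixList ω m) :=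
    fun m hm => lt_of_not_ge (Nat.find_min hex hm)
  -- interval endpoints
  set b : ℕ → ℝ := fun k => G.fPathMap δ h (prefixList ω k)
      (h (G.toGIFS.pathTgt i (prefixList ω k))) with hbdef
  have hy₁ab : ∀ k, G.fPathMap δ h (prefixList ω k) 0 ≤ y₁ ∧ y₁ ≤ b k :=
    fun k => mem_fPathSet_bounds G δ h i _ y₁ (hωmem k)
  have hb0 : b 0 = h i := rfl
  -- the minimum of the right endpoints up to level n₁
  have hrangene : (Finset.range (n₁ + 1)).Nonempty := ⟨0, by simp⟩
  set z := (Finset.range (n₁ + 1)).inf' hrangene b with hzdef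
  have hzle : ∀ k, k ≤ n₁ → z ≤ b k :=
    fun k hk => Finset.inf'_le b (Finset.mem_range.2 (by omega))
  have hy₁z : y₁ ≤ z := Finset.le_inf' hrangene b (fun k _ => (hy₁ab k).2)
  obtain ⟨k₀, hk₀mem, hk₀eq⟩ := Finset.exists_mem_eq_inf' hrangene b
  have hk₀le : k₀ ≤ n₁ := by
    have := Finset.mem_range.1 hk₀mem
    omega
  have hzmem : z ∈ G.fPathSet δ h i (prefixList ω n₁) :=
    mem_fPathSet_of_between G δ h i _ z (le_trans (hy₁ab n₁).1 hy₁z) (hzle n₁ le_rfl)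
  by_cases hcase : y₂ ≤ z
  · -- same cylinder
    have hy₂mem : y₂ ∈ G.fPathSet δ h i (prefixList ω n₁) :=
      mem_fPathSet_of_between G δ h i _ y₂ (le_trans (hy₁ab n₁).1 hle)
        (le_trans hcase (hzle n₁ le_rfl))
    have := hpair ω hω0 hωc n₁ hn₁le y₁ (hωmem n₁) y₂ hy₂mem
    have hDlam : 0 ≤ D * lam := mul_nonneg hD0 hlampos.le
    calc dist (ψ y₁) (ψ y₂) ≤ D * lam := this
      _ ≤ 2 * D * lam := by linarith
      _ = _ := hfinal
  · -- two adjacent cylinders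
    push_neg at hcase
    have hexz : ∃ k, b k = z := ⟨k₀, hk₀eq.symm⟩
    set kst := Nat.find hexz with hkstdef
    have hkb : b kst = z := Nat.find_spec hexz
    have hkmin : ∀ m, m < kst → b m ≠ z := fun m hm => Nat.find_min hexz hm
    have hkle : kst ≤ k₀ := Nat.find_min' hexz hk₀eq.symm
    have hkstle : kst ≤ n₁ := le_trans hkle hk₀le
    have hkpos : 0 < kst := by
      rcases Nat.eq_zero_or_pos kst with h0 | h0
      · exfalso
        rw [h0, hb0] at hkb
        have := hy₂.2
        linarith
      · exact h0
    obtain ⟨m, hmk⟩ : ∃ m, kst = m + 1 := ⟨kst - 1, by omega⟩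
    have hmlt : m < n₁ := by omega
    have hsrce : G.src (ω m) = G.toGIFS.pathTgt i (prefixList ω m) :=
      src_prefix G ω hω0 hωc m
    have hbm1 : b (m+1) = G.fPathMap δ h (prefixList ω m)
        (G.r (ω m) ^ δ * h (G.tgt (ω m)) + G.bCoef δ h (ω m)) := by
      show G.fPathMap δ h (prefixList ω (m+1))
        (h (G.toGIFS.pathTgt i (prefixList ω (m+1)))) = _
      rw [pathTgt_prefix_succ, prefixList_succ, fPathMap_append]
      rfl
    have hbmz : b (m+1) = z := by rw [← hmk]; exact hkb
    by_cases hsucc : ∃ f, G.elt (ω m) f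
    · obtain ⟨f₀, hf₀⟩ := hsucc
      have hUne : (Finset.univ.filter (fun f => G.elt (ω m) f)).Nonempty :=
        ⟨f₀, by simp [hf₀]⟩
      obtain ⟨e', he'U, he'min⟩ := exists_rel_max (fun x y => G.elt y x)
        (fun hab hbc => G.elt_trans hbc hab) _ hUne
        (fun p hp r hr hpr => by
          have hp' : G.elt (ω m) p := by simpa using hp
          have hr' : G.elt (ω m) r := by simpa using hr
          rcases G.elt_total p r ((G.elt_src hp').symm.trans (G.elt_src hr')) with h1|h1|h1
          · exact Or.inr h1
          · exact absurd h1 hpr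
          · exact Or.inl h1)
      have he' : G.elt (ω m) e' := by simpa using he'U
      have hbe' : G.bCoef δ h e' = G.bCoef δ h (ω m) + h (G.tgt (ω m)) * G.r (ω m) ^ δ :=
        bCoef_succ G δ h (ω m) e' he' (fun f hf hfne => he'min f (by simp [hf]) hfne)
      have hsrce' : G.src e' = G.toGIFS.pathTgt i (prefixList ω m) :=
        (G.elt_src he').symm.trans hsrce
      -- tail of minimal edges
      choose minE hminE1 hminE2 using min_edge_exists G δ h hcov
      set τ : ℕ → G.Edge := fun k =>
        Nat.rec (motive := fun _ => G.Edge) e' (fun _ ek => minE (G.tgt ek)) k with hτdef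
      have hτ0 : τ 0 = e' := rfl
      have hτsucc : ∀ k, τ (k+1) = minE (G.tgt (τ k)) := fun k => rfl
      have hτc : ∀ k, G.tgt (τ k) = G.src (τ (k+1)) := fun k => by
        rw [hτsucc]; exact (hminE1 _).symm
      have hτ0src : G.src (τ 0) = G.toGIFS.pathTgt i (prefixList ω m) := by
        rw [hτ0]; exact hsrce'
      obtain ⟨ω', hω'0, hω'c, hω'pre, hω'agree⟩ := glue G ω τ hω0 hωc m hτ0src hτc
      -- prefixes of the tail are anchored at `bCoef e'`
      have hanchor : ∀ k, 1 ≤ k → G.fPathMap δ h (prefixList τ k) 0 = G.bCoef δ h e' := by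
        intro k hk
        induction k with
        | zero => omega
        | succ k ih =>
            rcases Nat.eq_zero_or_pos k with h0 | h0
            · subst h0
              rw [prefixList_succ, prefixList_zero, List.nil_append, hτ0]
              show G.fmap δ h e' 0 = _
              rw [fmap_apply]
              ring
            · rw [prefixList_succ, fPathMap_append]
              have hzero : G.fPathMap δ h [τ k] 0 = 0 := by
                show G.fmap δ h (τ k) 0 = 0
                obtain ⟨k', rfl⟩ : ∃ k', k = k' + 1 := ⟨k - 1, by omega⟩
                rw [fmap_apply, hτsucc k', hminE2]
                ring
              simp only [Function.comp_apply]
              rw [hzero, ih h0]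
      -- hence the glued path's cylinders all have left endpoint `z`
      have hzleft : ∀ k, 1 ≤ k → G.fPathMap δ h (prefixList ω' (m + k)) 0 = z := by
        intro k hk
        rw [hω'pre k, fPathMap_append]
        simp only [Function.comp_apply]
        rw [hanchor k hk, hbe', ← hbmz, hbm1]
        congr 1
        ring
      -- stopping time for ω'
      have hex' : ∃ n, lratio G.toGIFS (prefixList ω' n) ≤ lam := by
        obtain ⟨n₂, hn₂⟩ := exists_pow_lt_of_lt_one hlampos hq1
        exact ⟨n₂, le_trans (hPq ω' n₂) hn₂.le⟩
      set n₂ := Nat.find hex' with hn₂def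
      have hn₂le : lratio G.toGIFS (prefixList ω' n₂) ≤ lam := Nat.find_spec hex'
      have hn₂min : ∀ j, j < n₂ → lam < lratio G.toGIFS (prefixList ω' j) :=
        fun j hj => lt_of_not_ge (Nat.find_min hex' hj)
      have hn₂ge : m + 1 ≤ n₂ := by
        by_contra hcon
        push_neg at hcon
        have hagree : prefixList ω' n₂ = prefixList ω n₂ :=
          prefixList_congr n₂ (fun k hk => hω'agree k (by omega))
        have hgt := hn₁min n₂ (by omega)
        rw [hagree] at hn₂le
        linarith
      obtain ⟨p, hp⟩ : ∃ p, n₂ = p + 1 := ⟨n₂ - 1, by omega⟩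
      have hPp : lam < lratio G.toGIFS (prefixList ω' p) := hn₂min p (by omega)
      have hPn₂ : lam * rmin < lratio G.toGIFS (prefixList ω' n₂) := by
        rw [hp, prefixList_succ, lratio_concat]
        calc lam * rmin < lratio G.toGIFS (prefixList ω' p) * rmin :=
              mul_lt_mul_of_pos_right hPp hrmin_pos
          _ ≤ lratio G.toGIFS (prefixList ω' p) * G.r (ω' p) :=
              mul_le_mul_of_nonneg_left (hrmin_le _) (lratio_pos _ _).le
      have hlen : t ≤ lrd G δ (prefixList ω' n₂) *
          h (G.toGIFS.pathTgt i (prefixList ω' n₂)) := by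
        rw [lrd_eq_lratio_rpow]
        calc t = (lam * rmin) ^ δ * hmn := hlamkey.symm
          _ ≤ lratio G.toGIFS (prefixList ω' n₂) ^ δ *
              h (G.toGIFS.pathTgt i (prefixList ω' n₂)) := by
              apply mul_le_mul
              · exact Real.rpow_le_rpow (mul_nonneg hlampos.le hrmin_pos.le) hPn₂.le hδpos.le
              · exact hmin_le _
              · exact hminpos.le
              · exact (Real.rpow_pos_of_pos (lratio_pos _ _) δ).le
      have hA : G.fPathMap δ h (prefixList ω' n₂) 0 = z := by
        have hn2eq : n₂ = m + (n₂ - m) := by omega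
        rw [hn2eq]
        exact hzleft (n₂ - m) (by omega)
      have htopeq := fPathMap_eq G δ h (prefixList ω' n₂)
        (h (G.toGIFS.pathTgt i (prefixList ω' n₂)))
      have hzmem' : z ∈ G.fPathSet δ h i (prefixList ω' n₂) := by
        apply mem_fPathSet_of_between G δ h i _ z (le_of_eq hA)
        rw [htopeq, hA]
        nlinarith [lrd_pos G δ (prefixList ω' n₂),
          (hcov (G.toGIFS.pathTgt i (prefixList ω' n₂))).1]
      have hy₂mem : y₂ ∈ G.fPathSet δ h i (prefixList ω' n₂) := by
        apply mem_fPathSet_of_between G δ h i _ y₂ (by rw [hA]; exact hcase.le)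
        rw [htopeq, hA]
        have hy2t : y₂ = y₁ + t := by rw [htdef]; ring
        linarith [hlen, hy₁z]
      have d1 : dist (ψ y₁) (ψ z) ≤ D * lam := hpair ω hω0 hωc n₁ hn₁le y₁ (hωmem n₁) z hzmem
      have d2 : dist (ψ z) (ψ y₂) ≤ D * lam := hpair ω' hω'0 hω'c n₂ hn₂le z hzmem' y₂ hy₂mem
      calc dist (ψ y₁) (ψ y₂) ≤ dist (ψ y₁) (ψ z) + dist (ψ z) (ψ y₂) := dist_triangle _ _ _
        _ ≤ D * lam + D * lam := add_le_add d1 d2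
        _ = 2 * D * lam := by ring
        _ = _ := hfinal
    · -- ω m is maximal: contradiction with minimality of kst
      exfalso
      have htop : ∀ f, G.src f = G.toGIFS.pathTgt i (prefixList ω m) → f ≠ ω m → G.elt f (ω m) := by
        intro f hf hfe
        rcases G.elt_total f (ω m) (hf.trans hsrce.symm) with h1|h1|h1
        · exact h1
        · exact absurd h1 hfe
        · exact absurd ⟨f, h1⟩ hsucc
      have hSs := Ssum_top G δ h _ (ω m) hsrce htop
      have hmono : b m ≤ b (m+1) := by
        rw [hbm1]
        show G.fPathMap δ h (prefixList ω m) (h (G.toGIFS.pathTgt i (prefixList ω m))) ≤ _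
        apply fPathMap_mono
        have h2 := (hcov (G.toGIFS.pathTgt i (prefixList ω m))).2
        rw [hSs, mul_comm (h (G.tgt (ω m))) (G.r (ω m) ^ δ), add_comm] at h2
        exact h2
      have hbmz' : b m = z := le_antisymm (hmono.trans hbmz.le) (hzle m (by omega))
      exact hkmin m (by omega) hbmz'
end
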